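/- Let μ : [0, ∞) → [0, ∞) be continuous, set F(a) := exp(−∫_0^a μ(s) ds), let Λ ≥ 0, let c : [0, ∞) → [0, ∞) be integrable, and let n0 : [0, ∞) → [0, ∞) be measurable and bounded. Define n(t, a) := Λ·F(a) for 0 ≤ a < t and n(t, a) := n0(a−t)·F(a)/F(a−t) for a ≥ t ≥ 0. Then ∫_0^∞ c(u)·n(t, u) du tends to Λ·∫_0^∞ c(u)·F(u) du as t → ∞. -/
import Mathlib


open MeasureTheory

/-- for the explicit solution `n(t,a)` of the age-structured transport
equation, the normalizing integral `∫_0^∞ c(u)·n(t,u) du` tends to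
`Λ·∫_0^∞ c(u)·F(u) du` as `t → ∞`. -/
theorem contact_integral_tendsto
    (μ : ℝ → ℝ) (hμ_cont : ContinuousOn μ (Set.Ici 0))
    (hμ_nonneg : ∀ a : ℝ, 0 ≤ a → 0 ≤ μ a)
    (F : ℝ → ℝ) (hF : ∀ a, F a = Real.exp (-∫ s in (0 : ℝ)..a, μ s))
    (Λ : ℝ) (hΛ : 0 ≤ Λ)
    (c : ℝ → ℝ) (hc_int : IntegrableOn c (Set.Ioi 0))
    (hc_nonneg : ∀ a : ℝ, 0 ≤ a → 0 ≤ c a)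
    (n0 : ℝ → ℝ) (hn0_meas : Measurable n0)
    (hn0_nonneg : ∀ a : ℝ, 0 ≤ a → 0 ≤ n0 a)
    (M : ℝ) (hn0_bdd : ∀ a : ℝ, 0 ≤ a → n0 a ≤ M)
    (n : ℝ → ℝ → ℝ)
    (hn_lt : ∀ t a : ℝ, 0 ≤ a → a < t → n t a = Λ * F a)
    (hn_ge : ∀ t a : ℝ, 0 ≤ t → t ≤ a → n t a = n0 (a - t) * F a / F (a - t)) :
    Filter.Tendsto (fun t => ∫ u in Set.Ioi (0 : ℝ), c u * n t u)
      Filter.atTop (nhds (Λ * ∫ u in Set.Ioi (0 : ℝ), c u * F u)) := by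
  -- basic facts about F
  have hμint : ∀ a b : ℝ, 0 ≤ a → a ≤ b → IntervalIntegrable μ volume a b := by
    intro a b ha hab
    apply (hμ_cont.mono ?_).intervalIntegrable
    rw [Set.uIcc_of_le hab]
    exact fun y hy => le_trans ha hy.1
  have hInonneg : ∀ a b : ℝ, 0 ≤ a → a ≤ b → 0 ≤ ∫ s in a..b, μ s := by
    intro a b ha hab
    apply intervalIntegral.integral_nonneg hab
    intro u hu
    exact hμ_nonneg u (le_trans ha hu.1)
  have hF_pos : ∀ a, 0 < F a := fun a => (hF a) ▸ Real.exp_pos _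
  have hF_le_one : ∀ a : ℝ, 0 ≤ a → F a ≤ 1 := by
    intro a ha
    rw [hF a, ← Real.exp_zero]
    exact Real.exp_le_exp.mpr (by linarith [hInonneg 0 a le_rfl ha])
  have hratio : ∀ t a : ℝ, 0 ≤ t → t ≤ a → F a / F (a - t) ≤ 1 := by
    intro t a ht hta
    have h1 : (0:ℝ) ≤ a - t := by linarith
    have hadd : (∫ s in (0:ℝ)..(a-t), μ s) + (∫ s in (a-t)..a, μ s)
        = ∫ s in (0:ℝ)..a, μ s :=
      intervalIntegral.integral_add_adjacent_intervals
        (hμint 0 (a-t) le_rfl h1) (hμint (a-t) a h1 (by linarith))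
    rw [hF a, hF (a-t), ← Real.exp_sub, ← Real.exp_zero]
    apply Real.exp_le_exp.mpr
    have := hInonneg (a-t) a h1 (by linarith)
    linarith
  set C : ℝ := Λ + max M 0 with hC
  have hC0 : 0 ≤ C := by positivity
  -- bounds on n
  have hn_bd : ∀ t u : ℝ, 0 ≤ t → 0 < u → 0 ≤ n t u ∧ n t u ≤ C := by
    intro t u ht hu
    rcases lt_or_ge u t with h | h
    · rw [hn_lt t u hu.le h]
      constructor
      · exact mul_nonneg hΛ (hF_pos u).le
      · have := hF_le_one u hu.le
        have : Λ * F u ≤ Λ * 1 := mul_le_mul_of_nonneg_left this hΛ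
        simp only [mul_one] at this
        have h2 : (0:ℝ) ≤ max M 0 := le_max_right _ _
        linarith
    · rw [hn_ge t u ht h]
      have h1 : (0:ℝ) ≤ u - t := by linarith
      have hrnn : 0 ≤ F u / F (u - t) := div_nonneg (hF_pos u).le (hF_pos _).le
      constructor
      · rw [mul_div_assoc]
        exact mul_nonneg (hn0_nonneg _ h1) hrnn
      · rw [mul_div_assoc]
        calc n0 (u - t) * (F u / F (u - t)) ≤ max M 0 * 1 := by
              apply mul_le_mul (le_trans (hn0_bdd _ h1) (le_max_left _ _))
                (hratio t u ht h) hrnn (le_max_right _ _)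
          _ ≤ C := by rw [mul_one]; linarith
  -- a measurable extension F' of F
  have hprim : ContinuousOn (fun a => ∫ s in (0:ℝ)..a, μ s) (Set.Ici 0) := by
    intro x hx
    have hx0 : (0:ℝ) ≤ x := hx
    have hle : (0:ℝ) ≤ x + 1 := by linarith
    have hint : IntegrableOn μ (Set.uIcc (0:ℝ) (x+1)) := by
      rw [Set.uIcc_of_le hle]
      exact (hμ_cont.mono (fun y hy => hy.1)).integrableOn_Icc
    have h := intervalIntegral.continuousOn_primitive_interval (a := (0:ℝ)) (b := x+1) hint
    have hx' : x ∈ Set.uIcc (0:ℝ) (x+1) := by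
      rw [Set.uIcc_of_le hle]; exact ⟨hx0, by linarith⟩
    refine (h x hx').mono_of_mem_nhdsWithin ?_
    rw [Set.uIcc_of_le hle, ← Set.Ici_inter_Iic]
    exact Filter.inter_mem self_mem_nhdsWithin
      (mem_nhdsWithin_of_mem_nhds (Iic_mem_nhds (by linarith)))
  have hF_cont : ContinuousOn F (Set.Ici 0) := by
    have : ContinuousOn (fun a => Real.exp (-∫ s in (0:ℝ)..a, μ s)) (Set.Ici 0) :=
      (Real.continuous_exp.comp_continuousOn hprim.neg)
    exact this.congr (fun a _ => hF a)
  set F' : ℝ → ℝ := fun a => F (max a 0) with hF'def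
  have hF'_cont : Continuous F' :=
    hF_cont.comp_continuous (continuous_id.max continuous_const)
      (fun a => Set.mem_Ici.mpr (le_max_right _ _))
  have hF'_eq : ∀ a : ℝ, 0 ≤ a → F' a = F a := by
    intro a ha; simp [hF'def, max_eq_left ha]
  -- dominated convergence
  have key :
      Filter.Tendsto (fun t => ∫ u in Set.Ioi (0 : ℝ), c u * n t u)
        Filter.atTop (nhds (∫ u in Set.Ioi (0 : ℝ), Λ * (c u * F u))) := by
    apply tendsto_integral_filter_of_dominated_convergence
      (fun u => C * |c u|)
    · -- eventual measurability
      filter_upwards [Filter.eventually_ge_atTop (0:ℝ)] with t ht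
      have : (fun u => c u * n t u)
          =ᶠ[ae (volume.restrict (Set.Ioi (0:ℝ)))]
          (fun u => c u * (if u < t then Λ * F' u
            else n0 (u - t) * F' u / F' (u - t))) := by
        filter_upwards [ae_restrict_mem measurableSet_Ioi] with u hu
        rcases lt_or_ge u t with h | h
        · rw [if_pos h, hn_lt t u (le_of_lt hu) h, hF'_eq u (le_of_lt hu)]
        · rw [if_neg (not_lt.mpr h), hn_ge t u ht h,
            hF'_eq u (le_trans ht h), hF'_eq (u - t) (by linarith)]
      refine AEStronglyMeasurable.congr ?_ this.symm
      apply AEStronglyMeasurable.mul hc_int.aestronglyMeasurable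
      apply Measurable.aestronglyMeasurable
      apply Measurable.ite (measurableSet_lt measurable_id measurable_const)
      · exact (hF'_cont.measurable).const_mul Λ
      · exact ((hn0_meas.comp (measurable_id.sub measurable_const)).mul
          hF'_cont.measurable).div
          (hF'_cont.measurable.comp (measurable_id.sub measurable_const))
    · -- eventual bound
      filter_upwards [Filter.eventually_ge_atTop (0:ℝ)] with t ht
      filter_upwards [ae_restrict_mem measurableSet_Ioi] with u hu
      have hu0 : (0:ℝ) < u := hu
      obtain ⟨h1, h2⟩ := hn_bd t u ht hu0
      have hcnn : 0 ≤ c u := hc_nonneg u hu0.le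
      rw [Real.norm_eq_abs, abs_of_nonneg (mul_nonneg hcnn h1), abs_of_nonneg hcnn]
      calc c u * n t u ≤ c u * C := mul_le_mul_of_nonneg_left h2 hcnn
        _ = C * c u := mul_comm _ _
    · exact (hc_int.norm.const_mul C)
    · -- pointwise limit
      filter_upwards [ae_restrict_mem measurableSet_Ioi] with u hu
      have hu0 : (0:ℝ) < u := hu
      apply Filter.Tendsto.congr' ?_ tendsto_const_nhds
      filter_upwards [Filter.eventually_gt_atTop u] with t htu
      rw [hn_lt t u hu0.le htu]; ring
  have : (∫ u in Set.Ioi (0 : ℝ), Λ * (c u * F u))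
      = Λ * ∫ u in Set.Ioi (0 : ℝ), c u * F u := MeasureTheory.integral_const_mul Λ _
  rwa [this] at key
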